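/- Let X(t) = ∑_{n=1}^∞ α_n Z_n φ_n(t) where (Z_n) are independent real random variables with mean 0, variance 1, absolutely continuous densities, (φ_n) is an orthonormal system in L²([0,1]), and ∑ α_n² < ∞ with each α_n > 0. Then for every d ≥ 0, lim_{h→0⁺} h^{−d}·P(‖X‖_{L²} ≤ h) = 0. Consequently X does not satisfy hypothesis (H) for the L² norm at the point 0. -/

import Mathlib

open MeasureTheory ProbabilityTheory Filter

/-- A function is absolutely continuous if it is an indefinite integral of a
locally integrable function. -/
def AbsCont (h : ℝ → ℝ) : Prop :=
  ∃ h' : ℝ → ℝ, LocallyIntegrable h' volume ∧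
    ∀ a b : ℝ, h b - h a = ∫ t in a..b, h' t

lemma AbsCont.continuous {g : ℝ → ℝ} (hg : AbsCont g) : Continuous g := by
  obtain ⟨g', hg', heq⟩ := hg
  have hfun : g = fun b => g 0 + ∫ t in (0:ℝ)..b, g' t := by
    funext b; have := heq 0 b; linarith
  rw [hfun]
  exact continuous_const.add (intervalIntegral.continuous_primitive
    (fun a b => (hg'.integrableOn_isCompact isCompact_uIcc).intervalIntegrable) 0)

lemma density_small_ball {Ω : Type*} [MeasurableSpace Ω] (P : Measure Ω) [IsProbabilityMeasure P]
    (Z : Ω → ℝ) (hm : Measurable Z) (f : ℝ → ℝ) (hc : Continuous f)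
    (hd : Measure.map Z P = volume.withDensity (fun x => ENNReal.ofReal (f x))) :
    ∃ M : ℝ, 0 ≤ M ∧ ∀ c : ℝ, 0 < c → c ≤ 1 → (P (Z ⁻¹' Set.Icc (-c) c)).toReal ≤ M * c := by
  obtain ⟨M0, hM0⟩ := (isCompact_Icc (a := (-1:ℝ)) (b := 1)).exists_bound_of_continuousOn
    hc.continuousOn
  refine ⟨2 * max M0 0, by positivity, fun c hc0 hc1 => ?_⟩
  have hmap : P (Z ⁻¹' Set.Icc (-c) c)
      = ∫⁻ x in Set.Icc (-c) c, ENNReal.ofReal (f x) := by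
    rw [← Measure.map_apply hm measurableSet_Icc, hd, withDensity_apply _ measurableSet_Icc]
  have hle : ∫⁻ x in Set.Icc (-c) c, ENNReal.ofReal (f x)
      ≤ ENNReal.ofReal (max M0 0) * volume (Set.Icc (-c) c) := by
    calc ∫⁻ x in Set.Icc (-c) c, ENNReal.ofReal (f x)
        ≤ ∫⁻ _ in Set.Icc (-c) c, ENNReal.ofReal (max M0 0) := by
          refine setLIntegral_mono' measurableSet_Icc fun x hx => ?_
          refine ENNReal.ofReal_le_ofReal ((le_abs_self _).trans ?_)
          exact le_max_of_le_left (hM0 x ⟨neg_le_neg hc1 |>.trans hx.1, hx.2.trans hc1⟩)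
      _ = ENNReal.ofReal (max M0 0) * volume (Set.Icc (-c) c) := by
          rw [setLIntegral_const]
  have hvol : volume (Set.Icc (-c) c) = ENNReal.ofReal (2 * c) := by
    rw [Real.volume_Icc]; ring_nf
  rw [hmap]
  calc (∫⁻ x in Set.Icc (-c) c, ENNReal.ofReal (f x)).toReal
      ≤ (ENNReal.ofReal (max M0 0) * ENNReal.ofReal (2 * c)).toReal := by
        refine ENNReal.toReal_mono (by finiteness) ?_
        rw [← hvol]; exact hle
    _ = max M0 0 * (2 * c) := by
        rw [← ENNReal.ofReal_mul (le_max_right _ _)]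
        exact ENNReal.toReal_ofReal (by positivity)
    _ = 2 * max M0 0 * c := by ring

theorem stmt12 {Ω : Type*} [MeasurableSpace Ω] (P : Measure Ω) [IsProbabilityMeasure P]
    (Z : ℕ → Ω → ℝ) (hmeas : ∀ n, Measurable (Z n))
    (hindep : iIndepFun Z P)
    (hmean : ∀ n, ∫ ω, Z n ω ∂P = 0)
    (hvar : ∀ n, ∫ ω, (Z n ω) ^ 2 ∂P = 1)
    (f : ℕ → ℝ → ℝ)
    (hdens : ∀ n, Measure.map (Z n) P = volume.withDensity (fun x => ENNReal.ofReal (f n x)))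
    (hfAC : ∀ n, AbsCont (f n))
    (α : ℕ → ℝ) (hα : ∀ n, 0 < α n) (hsum : Summable (fun n => (α n) ^ 2))
    (φ : ℕ → Lp ℝ 2 (volume.restrict (Set.Icc (0:ℝ) 1)))
    (hortho : Orthonormal ℝ φ)
    (X : Ω → Lp ℝ 2 (volume.restrict (Set.Icc (0:ℝ) 1)))
    (hX : ∀ ω, HasSum (fun n => (α n * Z n ω) • φ n) (X ω)) :
    (∀ d : ℝ, 0 ≤ d →
      Tendsto (fun h : ℝ => h ^ (-d) * (P {ω | ‖X ω‖ ≤ h}).toReal)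
        (nhdsWithin 0 (Set.Ioi 0)) (nhds 0)) ∧
    -- `X` fails hypothesis (H) for the `L²` norm at the point `0`
    ¬ ∃ θ : ℝ, 0 < θ ∧ ∀ h ∈ Set.Ioc (0:ℝ) 1,
        0 < (P {ω | ‖X ω‖ ≤ h}).toReal ∧
        θ * (P {ω | ‖X ω‖ ≤ h}).toReal ≤
          ∫ t in (0:ℝ)..1, (P {ω | ‖X ω‖ ≤ h * t}).toReal := by
  classical
  -- inner products
  have hinner : ∀ ω n, (inner ℝ (φ n) (X ω) : ℝ) = α n * Z n ω := by
    intro ω n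
    have h1 := (hX ω).mapL (innerSL ℝ (φ n))
    have h2 : (fun m => (innerSL ℝ (φ n)) ((α m * Z m ω) • φ m))
        = fun m => if m = n then α n * Z n ω else 0 := by
      funext m
      simp only [innerSL_apply_apply, inner_smul_right, orthonormal_iff_ite.mp hortho]
      by_cases hmn : m = n
      · simp [hmn]
      · simp [hmn, Ne.symm hmn]
    rw [h2] at h1
    have := h1.unique (hasSum_ite_eq n (α n * Z n ω))
    simpa using this
  have hbessel : ∀ (ω : Ω) (s : Finset ℕ), ∑ n ∈ s, (α n * Z n ω) ^ 2 ≤ ‖X ω‖ ^ 2 := by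
    intro ω s
    have := hortho.sum_inner_products_le (X ω) (s := s)
    simpa [hinner, Real.norm_eq_abs, mul_pow, sq_abs] using this
  -- choose density bounds
  have hM := fun n => density_small_ball P (Z n) (hmeas n) (f n) (hfAC n).continuous (hdens n)
  set M : ℕ → ℝ := fun n => Classical.choose (hM n) with hMdef
  have hM0 : ∀ n, 0 ≤ M n := fun n => (Classical.choose_spec (hM n)).1
  have hMb : ∀ n, ∀ c : ℝ, 0 < c → c ≤ 1 →
      (P (Z n ⁻¹' Set.Icc (-c) c)).toReal ≤ M n * c :=
    fun n => (Classical.choose_spec (hM n)).2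
  have key : ∀ d : ℝ, 0 ≤ d →
      Tendsto (fun h : ℝ => h ^ (-d) * (P {ω | ‖X ω‖ ≤ h}).toReal)
        (nhdsWithin 0 (Set.Ioi 0)) (nhds 0) := by
    intro d hd
    set N : ℕ := ⌈d⌉₊ + 1 with hNdef
    have hNd : d < (N : ℝ) := by
      calc d ≤ (⌈d⌉₊ : ℝ) := Nat.le_ceil d
        _ < (N : ℝ) := by rw [hNdef]; push_cast; linarith
    set C : ℝ := ∏ n ∈ Finset.range N, (M n / α n) with hCdef
    have hC0 : 0 ≤ C := Finset.prod_nonneg fun n _ => div_nonneg (hM0 n) (hα n).le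
    -- the key pointwise bound
    have hbound : ∀ h : ℝ, 0 < h → (∀ n ∈ Finset.range N, h ≤ α n) →
        (P {ω | ‖X ω‖ ≤ h}).toReal ≤ C * h ^ N := by
      intro h hh hhα
      have hsub : {ω | ‖X ω‖ ≤ h} ⊆
          ⋂ n ∈ Finset.range N, Z n ⁻¹' Set.Icc (-(h / α n)) (h / α n) := by
        intro ω hω
        simp only [Set.mem_iInter, Set.mem_preimage, Set.mem_Icc, ← abs_le]
        intro n hn
        have h1 : (α n * Z n ω) ^ 2 ≤ ‖X ω‖ ^ 2 := by
          refine le_trans ?_ (hbessel ω (Finset.range N))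
          exact Finset.single_le_sum (f := fun m => (α m * Z m ω) ^ 2) (fun m _ => sq_nonneg _) hn
        have h2 : ‖X ω‖ ^ 2 ≤ h ^ 2 := by
          have := hω
          simp only [Set.mem_setOf_eq] at this
          exact pow_le_pow_left₀ (norm_nonneg _) this 2
        have h3 : |α n * Z n ω| ≤ h := by
          have := Real.sqrt_le_sqrt (h1.trans h2)
          rwa [Real.sqrt_sq_eq_abs, Real.sqrt_sq hh.le] at this
        rw [le_div_iff₀ (hα n)]
        calc |Z n ω| * α n = |α n * Z n ω| := by
              rw [abs_mul, abs_of_pos (hα n)]; ring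
          _ ≤ h := h3
      calc (P {ω | ‖X ω‖ ≤ h}).toReal
          ≤ (P (⋂ n ∈ Finset.range N, Z n ⁻¹' Set.Icc (-(h / α n)) (h / α n))).toReal :=
            ENNReal.toReal_mono (measure_ne_top P _) (measure_mono hsub)
        _ = (∏ n ∈ Finset.range N, P (Z n ⁻¹' Set.Icc (-(h / α n)) (h / α n))).toReal := by
            rw [hindep.meas_biInter
              (fun n _ => ⟨Set.Icc (-(h / α n)) (h / α n), measurableSet_Icc, rfl⟩)]
        _ = ∏ n ∈ Finset.range N, (P (Z n ⁻¹' Set.Icc (-(h / α n)) (h / α n))).toReal :=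
            ENNReal.toReal_prod _ _
        _ ≤ ∏ n ∈ Finset.range N, (M n * (h / α n)) := by
            refine Finset.prod_le_prod (fun n _ => ENNReal.toReal_nonneg) (fun n hn => ?_)
            exact hMb n _ (div_pos hh (hα n)) ((div_le_one (hα n)).mpr (hhα n hn))
        _ = C * h ^ N := by
            rw [Finset.prod_congr rfl (fun n _ => show M n * (h / α n) = (M n / α n) * h by ring),
              Finset.prod_mul_distrib, Finset.prod_const, Finset.card_range, hCdef]
    have he : (0:ℝ) < (N:ℝ) - d := by linarith
    have htb : Tendsto (fun h : ℝ => C * h ^ ((N:ℝ) - d)) (nhdsWithin 0 (Set.Ioi 0)) (nhds 0) := by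
      have h0 : Tendsto (fun h : ℝ => h ^ ((N:ℝ) - d)) (nhds 0) (nhds 0) := by
        have hc := (Real.continuousAt_rpow_const 0 ((N:ℝ) - d) (Or.inr he.le))
        simpa [ContinuousAt, Real.zero_rpow he.ne'] using hc
      simpa using (h0.mono_left nhdsWithin_le_nhds).const_mul C
    apply squeeze_zero' ?_ ?_ htb
    · filter_upwards [self_mem_nhdsWithin] with h hh
      exact mul_nonneg (Real.rpow_nonneg (le_of_lt hh) _) ENNReal.toReal_nonneg
    · have hev : ∀ᶠ h in nhdsWithin 0 (Set.Ioi 0), ∀ n ∈ Finset.range N, h ≤ α n := by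
        rw [eventually_all_finset]
        intro n _
        filter_upwards [Ioo_mem_nhdsGT_of_mem (Set.left_mem_Ico.mpr (hα n))] with h hh
        exact hh.2.le
      filter_upwards [hev, self_mem_nhdsWithin] with h hhα hh
      replace hh : (0:ℝ) < h := hh
      calc h ^ (-d) * (P {ω | ‖X ω‖ ≤ h}).toReal ≤ h ^ (-d) * (C * h ^ N) :=
            mul_le_mul_of_nonneg_left (hbound h hh hhα) (Real.rpow_nonneg hh.le _)
        _ = C * h ^ ((N:ℝ) - d) := by
            rw [← Real.rpow_natCast h N, show (N:ℝ) - d = -d + N from by ring,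
              Real.rpow_add hh]
            ring
  refine ⟨key, ?_⟩
  rintro ⟨θ, hθ, hH⟩
  set φP : ℝ → ℝ := fun h => (P {ω | ‖X ω‖ ≤ h}).toReal with hφPdef
  have hmono : Monotone φP := fun a b hab =>
    ENNReal.toReal_mono (measure_ne_top P _) (measure_mono fun ω hω => le_trans hω hab)
  have hφP0 : ∀ h, 0 ≤ φP h := fun h => ENNReal.toReal_nonneg
  have hint : ∀ a b : ℝ, IntervalIntegrable φP volume a b := fun a b =>
    hmono.intervalIntegrable
  set ψ : ℝ → ℝ := fun h => ∫ s in (0:ℝ)..h, φP s with hψdef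
  have hH' : ∀ h : ℝ, 0 < h → h ≤ 1 → θ * h * φP h ≤ ψ h := by
    intro h hh h1
    have hle := (hH h ⟨hh, h1⟩).2
    have hrw : (∫ t in (0:ℝ)..1, (P {ω | ‖X ω‖ ≤ h * t}).toReal)
        = ∫ t in (0:ℝ)..1, φP (h * t) := rfl
    rw [hrw, intervalIntegral.integral_comp_mul_left φP hh.ne'] at hle
    simp only [mul_zero, mul_one, smul_eq_mul] at hle
    calc θ * h * φP h = h * (θ * φP h) := by ring
      _ ≤ h * (h⁻¹ * ∫ x in (0:ℝ)..h, φP x) := mul_le_mul_of_nonneg_left hle hh.le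
      _ = ∫ x in (0:ℝ)..h, φP x := by
          rw [← mul_assoc, mul_inv_cancel₀ hh.ne', one_mul]
      _ = ψ h := rfl
  have hφPpos : ∀ h : ℝ, 0 < h → h ≤ 1 → 0 < φP h := fun h hh h1 => (hH h ⟨hh, h1⟩).1
  have hψsplit : ∀ a b : ℝ, ψ b - ψ a = ∫ s in a..b, φP s := by
    intro a b
    have := intervalIntegral.integral_add_adjacent_intervals (hint 0 a) (hint a b)
    simp only [hψdef]; linarith
  have hψle : ∀ h : ℝ, 0 ≤ h → ψ h ≤ h * φP h := by
    intro h hh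
    calc ψ h ≤ ∫ _ in (0:ℝ)..h, φP h := by
          refine intervalIntegral.integral_mono_on hh (hint 0 h) intervalIntegrable_const ?_
          intro s hs; exact hmono hs.2
      _ = h * φP h := by simp [smul_eq_mul]
  have hθ1 : θ ≤ 1 := by
    have h1 := hH' 1 one_pos le_rfl
    have h2 := hψle 1 zero_le_one
    have h3 := hφPpos 1 one_pos le_rfl
    nlinarith
  set l : ℝ := 1 - θ / 2 with hldef
  have hl0 : 0 < l := by rw [hldef]; linarith
  have hl1 : l < 1 := by rw [hldef]; linarith
  have hlhalf : 1 / 2 ≤ l := by rw [hldef]; linarith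
  have hψ1 : 0 < ψ 1 := by
    have h1 := hH' 1 one_pos le_rfl
    have h3 := hφPpos 1 one_pos le_rfl
    nlinarith
  have hrec : ∀ h : ℝ, 0 < h → h ≤ 1 → ψ h / 2 ≤ ψ (l * h) := by
    intro h hh h1
    have hlh : l * h < h := by nlinarith
    have hsp := hψsplit (l * h) h
    have hub : ∫ s in (l * h)..h, φP s ≤ (h - l * h) * φP h := by
      calc ∫ s in (l * h)..h, φP s ≤ ∫ _ in (l * h)..h, φP h := by
            refine intervalIntegral.integral_mono_on hlh.le (hint _ _)
              intervalIntegrable_const ?_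
            intro s hs; exact hmono hs.2
        _ = (h - l * h) * φP h := by simp [smul_eq_mul]
    have hkey := hH' h hh h1
    have heq : (h - l * h) * φP h = (1 / 2) * (θ * h * φP h) := by rw [hldef]; ring
    have c1 : ψ h - ψ (l * h) ≤ 1 / 2 * (θ * h * φP h) := by
      rw [hsp, ← heq]; exact hub
    have c2 : (1:ℝ) / 2 * (θ * h * φP h) ≤ 1 / 2 * ψ h := by linarith [hkey]
    linarith [c1, c2]
  have hiter : ∀ k : ℕ, ψ 1 / 2 ^ k ≤ ψ (l ^ k) := by
    intro k; induction k with
    | zero => simp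
    | succ k ih =>
      have hlk1 : l ^ k ≤ 1 := pow_le_one₀ hl0.le hl1.le
      have hlk0 : 0 < l ^ k := pow_pos hl0 k
      have hr := hrec (l ^ k) hlk0 hlk1
      calc ψ 1 / 2 ^ (k + 1) = (ψ 1 / 2 ^ k) / 2 := by ring
        _ ≤ ψ (l ^ k) / 2 := by linarith
        _ ≤ ψ (l * l ^ k) := hr
        _ = ψ (l ^ (k + 1)) := by rw [← pow_succ']
  set β : ℝ := Real.logb l (1 / 2) with hβdef
  have hlβ : l ^ β = (1 / 2 : ℝ) := Real.rpow_logb hl0 (ne_of_lt hl1) (by norm_num)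
  have hβ1 : 1 ≤ β := by
    have hlog : Real.log l < 0 := Real.log_neg hl0 hl1
    rw [hβdef, Real.logb, le_div_iff_of_neg hlog, one_mul]
    exact Real.log_le_log (by norm_num) hlhalf
  -- lower bound : φP h ≥ (ψ 1 / 2) * h ^ (β - 1) on (0, 1]
  have hlow : ∀ h : ℝ, 0 < h → h ≤ 1 → ψ 1 / 2 * h ^ (β - 1) ≤ φP h := by
    intro h hh h1
    have ex : ∃ n : ℕ, l ^ n < h := exists_pow_lt_of_lt_one hh hl1
    set K := Nat.find ex with hKdef
    have hK : l ^ K < h := Nat.find_spec ex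
    have hKne : K ≠ 0 := by
      intro h0
      rw [h0, pow_zero] at hK; linarith
    have hKpos : 0 < K := Nat.pos_of_ne_zero hKne
    have hhle : h ≤ l ^ (K - 1) :=
      not_lt.mp (Nat.find_min ex (Nat.sub_lt hKpos one_pos))
    -- h ^ β ≤ (1/2) ^ (K - 1)
    have hpow : h ^ β ≤ (1 / 2 : ℝ) ^ (K - 1) := by
      calc h ^ β ≤ (l ^ (K - 1) : ℝ) ^ β :=
            Real.rpow_le_rpow hh.le hhle (by linarith)
        _ = (1 / 2 : ℝ) ^ (K - 1) := by
            rw [← Real.rpow_natCast l (K - 1), ← Real.rpow_mul hl0.le, mul_comm,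
              Real.rpow_mul hl0.le, hlβ, Real.rpow_natCast]
    -- ψ 1 / 2 * h ^ β ≤ ψ h
    have hψh : ψ 1 / 2 * h ^ β ≤ ψ h := by
      have h1' := hiter K
      have h2 : ψ (l ^ K) ≤ ψ h := by
        have := hψsplit (l ^ K) h
        have h3 : 0 ≤ ∫ s in (l ^ K)..h, φP s :=
          intervalIntegral.integral_nonneg hK.le fun s _ => hφP0 s
        linarith
      have h4 : ψ 1 / 2 ^ K = ψ 1 / 2 * (1 / 2 : ℝ) ^ (K - 1) := by
        have hgen : ∀ n : ℕ, ψ 1 / 2 ^ (n + 1) = ψ 1 / 2 * (1 / 2 : ℝ) ^ n := by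
          intro n
          rw [pow_succ]
          field_simp
          rw [← mul_pow]; norm_num
        calc ψ 1 / 2 ^ K = ψ 1 / 2 ^ ((K - 1) + 1) := by
              rw [Nat.sub_add_cancel hKpos]
          _ = ψ 1 / 2 * (1 / 2 : ℝ) ^ (K - 1) := hgen _
      have h5 : ψ 1 / 2 * h ^ β ≤ ψ 1 / 2 * (1 / 2 : ℝ) ^ (K - 1) :=
        mul_le_mul_of_nonneg_left hpow (by linarith)
      calc ψ 1 / 2 * h ^ β ≤ ψ 1 / 2 ^ K := by rw [h4]; exact h5
        _ ≤ ψ (l ^ K) := h1'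
        _ ≤ ψ h := h2
    have h6 : ψ h ≤ h * φP h := hψle h hh.le
    have h7 : h ^ (β - 1) = h ^ β / h := by
      rw [Real.rpow_sub hh, Real.rpow_one]
    have hgoal : ψ 1 / 2 * (h ^ β / h) = (ψ 1 / 2 * h ^ β) / h := by ring
    rw [h7, hgoal, div_le_iff₀ hh]
    calc ψ 1 / 2 * h ^ β ≤ ψ h := hψh
      _ ≤ h * φP h := h6
      _ = φP h * h := mul_comm _ _
  -- contradiction with `key`
  have hkey := key (β - 1) (by linarith)
  have hev : ∀ᶠ h in nhdsWithin (0:ℝ) (Set.Ioi 0),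
      ψ 1 / 2 ≤ h ^ (-(β - 1)) * φP h := by
    filter_upwards [Ioc_mem_nhdsGT_of_mem (Set.left_mem_Ico.mpr one_pos)] with h hh
    obtain ⟨hh0, hh1⟩ := hh
    have hl' := hlow h hh0 hh1
    have hrp : h ^ (-(β - 1)) * h ^ (β - 1) = 1 := by
      rw [← Real.rpow_add hh0]; simp
    calc ψ 1 / 2 = h ^ (-(β - 1)) * (ψ 1 / 2 * h ^ (β - 1)) := by
          rw [show h ^ (-(β-1)) * (ψ 1 / 2 * h ^ (β-1))
              = ψ 1 / 2 * (h ^ (-(β-1)) * h ^ (β-1)) from by ring, hrp, mul_one]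
      _ ≤ h ^ (-(β - 1)) * φP h :=
          mul_le_mul_of_nonneg_left hl' (Real.rpow_nonneg hh0.le _)
  have hlt : ∀ᶠ h in nhdsWithin (0:ℝ) (Set.Ioi 0),
      (fun h : ℝ => h ^ (-(β-1)) * (P {ω | ‖X ω‖ ≤ h}).toReal) h < ψ 1 / 2 :=
    hkey.eventually_lt_const (by linarith)
  obtain ⟨x, hx1, hx2⟩ := (hev.and hlt).exists
  exact absurd hx1 (not_le.mpr hx2)
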